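/- Let {Aᵢ : i ∈ I} be a family of non-trivial Abelian linearly ordered groups with |I| > 1 such that for each i ∈ I and each a ∈ Aᵢ with a > 0 there exists a₀ ∈ Aᵢ with 0 < a₀ < a. Let A = ∏_{i∈I} Aᵢ be endowed with the strict product ordering, and let G be a non-Abelian directed po-group with RDP₁. Then the lexicographic product A ×⃗ G satisfies RDP but RDP₁ fails in it. -/

import Mathlib

set_option linter.unusedSectionVars false


/-- A po-group satisfies RDP if every equation `a₁ + a₂ = b₁ + b₂` of positive elements
admits a Riesz decomposition by four positive elements. -/
def RDP (G : Type*) [AddGroup G] [PartialOrder G] : Prop :=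
  ∀ a₁ a₂ b₁ b₂ : G, 0 ≤ a₁ → 0 ≤ a₂ → 0 ≤ b₁ → 0 ≤ b₂ → a₁ + a₂ = b₁ + b₂ →
    ∃ c₁₁ c₁₂ c₂₁ c₂₂ : G, 0 ≤ c₁₁ ∧ 0 ≤ c₁₂ ∧ 0 ≤ c₂₁ ∧ 0 ≤ c₂₂ ∧
      a₁ = c₁₁ + c₁₂ ∧ a₂ = c₂₁ + c₂₂ ∧ b₁ = c₁₁ + c₂₁ ∧ b₂ = c₁₂ + c₂₂

/-- A po-group satisfies RDP₁ if every equation `a₁ + a₂ = b₁ + b₂` of positive elements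
admits a Riesz decomposition `c₁₁, c₁₂, c₂₁, c₂₂ ≥ 0` in which any `0 ≤ x ≤ c₁₂` and
`0 ≤ y ≤ c₂₁` commute. -/
def RDP1 (G : Type*) [AddGroup G] [PartialOrder G] : Prop :=
  ∀ a₁ a₂ b₁ b₂ : G, 0 ≤ a₁ → 0 ≤ a₂ → 0 ≤ b₁ → 0 ≤ b₂ → a₁ + a₂ = b₁ + b₂ →
    ∃ c₁₁ c₁₂ c₂₁ c₂₂ : G, 0 ≤ c₁₁ ∧ 0 ≤ c₁₂ ∧ 0 ≤ c₂₁ ∧ 0 ≤ c₂₂ ∧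
      a₁ = c₁₁ + c₁₂ ∧ a₂ = c₂₁ + c₂₂ ∧ b₁ = c₁₁ + c₂₁ ∧ b₂ = c₁₂ + c₂₂ ∧
      ∀ x y : G, 0 ≤ x → x ≤ c₁₂ → 0 ≤ y → y ≤ c₂₁ → x + y = y + x

/-- The direct product `∏ i, A i` regarded with the strict product ordering. -/
def StrictPi {I : Type*} (A : I → Type*) : Type _ := ∀ i, A i

instance {I : Type*} (A : I → Type*) [∀ i, AddCommGroup (A i)] :
    AddCommGroup (StrictPi A) :=
  inferInstanceAs (AddCommGroup (∀ i, A i))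

/-- The strict product ordering: `(aⁱ) ≦ (bⁱ)` iff `aⁱ = bⁱ` for all `i`, or
`aⁱ < bⁱ` for all `i`. -/
instance {I : Type*} (A : I → Type*) [∀ i, PartialOrder (A i)] :
    PartialOrder (StrictPi A) where
  le x y := x = y ∨ ∀ i, x i < y i
  le_refl x := Or.inl rfl
  le_trans x y z hxy hyz := by
    rcases hxy with rfl | hxy
    · exact hyz
    · rcases hyz with rfl | hyz
      · exact Or.inr hxy
      · exact Or.inr fun i => lt_trans (hxy i) (hyz i)
  le_antisymm x y hxy hyx := by
    rcases hxy with rfl | hxy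
    · rfl
    · rcases hyx with rfl | hyx
      · rfl
      · exact funext fun i => absurd (hyx i) (lt_asymm (hxy i))


section AuxLemmas

variable {I : Type*} {A : I → Type*} [∀ i, AddCommGroup (A i)] [∀ i, LinearOrder (A i)] [∀ i, IsOrderedAddMonoid (A i)]

lemma sp_le_def {a b : StrictPi A} : a ≤ b ↔ (a = b ∨ ∀ i, a i < b i) := Iff.rfl

lemma sp_nonneg_iff {a : StrictPi A} : 0 ≤ a ↔ a = 0 ∨ ∀ i, 0 < a i := by
  rw [sp_le_def]
  constructor
  · rintro (h | h)
    · exact Or.inl h.symm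
    · exact Or.inr h
  · rintro (rfl | h)
    · exact Or.inl rfl
    · exact Or.inr h

lemma sp_pos_iff [Nonempty I] {a : StrictPi A} : 0 < a ↔ ∀ i, 0 < a i := by
  constructor
  · intro h
    rcases sp_nonneg_iff.1 h.le with rfl | h'
    · exact absurd rfl h.ne
    · exact h'
  · intro h
    refine lt_of_le_of_ne (sp_nonneg_iff.2 (Or.inr h)) ?_
    intro e
    have := h (Classical.arbitrary I)
    rw [← e] at this
    exact lt_irrefl _ this

lemma sp_sum_ne_zero [Nonempty I] {w x : StrictPi A} (hw : ∀ i, 0 < w i)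
    (hx : x = 0 ∨ ∀ i, 0 < x i) : w + x ≠ 0 := by
  intro h
  have i := Classical.arbitrary I
  have hxi : (0 : A i) ≤ x i := by
    rcases hx with rfl | hx
    · exact le_rfl
    · exact (hx i).le
  have hpos : (0 : A i) < (w + x) i := add_pos_of_pos_of_nonneg (hw i) hxi
  rw [h] at hpos
  exact lt_irrefl _ hpos

/-- Coordinatewise strict Riesz splitting using density. -/
lemma sp_split (hdense : ∀ i, ∀ a : A i, 0 < a → ∃ a₀ : A i, 0 < a₀ ∧ a₀ < a)
    {u v w x : StrictPi A} (hu : ∀ i, 0 < u i) (hv : ∀ i, 0 < v i)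
    (hw : ∀ i, 0 < w i) (hx : ∀ i, 0 < x i) (h : u + v = w + x) :
    ∃ q : StrictPi A, (∀ i, 0 < q i) ∧ (∀ i, 0 < (u - q) i) ∧ (∀ i, 0 < (w - q) i) ∧
      (∀ i, 0 < (x - u + q) i) := by
  have key : ∀ i, ∃ qi : A i, 0 < qi ∧ qi < u i ∧ qi < w i ∧ u i - x i < qi := by
    intro i
    have hi : u i + v i = w i + x i := congrFun h i
    set m := min (u i) (w i) with hm
    set l := max (u i - x i) 0 with hl
    have h1 : u i - x i < u i := sub_lt_self _ (hx i)
    have h2 : u i - x i < w i := by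
      rw [sub_lt_iff_lt_add, ← hi]
      exact lt_add_of_pos_right _ (hv i)
    have hlm : l < m := max_lt (lt_min h1 h2) (lt_min (hu i) (hw i))
    obtain ⟨ε, hε1, hε2⟩ := hdense i (m - l) (sub_pos.2 hlm)
    have hq0 : (0 : A i) < l + ε :=
      hε1.trans_le (le_add_of_nonneg_left (le_max_right _ _))
    have hqm : l + ε < m := by
      have := add_lt_add_right hε2 l
      rwa [add_sub_cancel] at this
    have hql : u i - x i < l + ε :=
      (le_max_left _ _).trans_lt (lt_add_of_pos_right _ hε1)
    exact ⟨l + ε, hq0, hqm.trans_le (min_le_left _ _), hqm.trans_le (min_le_right _ _), hql⟩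
  choose q hq1 hq2 hq3 hq4 using key
  refine ⟨q, hq1, fun i => sub_pos.2 (hq2 i), fun i => sub_pos.2 (hq3 i), fun i => ?_⟩
  show 0 < x i - u i + q i
  have := sub_pos.2 (hq4 i)
  calc (0 : A i) < q i - (u i - x i) := this
    _ = x i - u i + q i := by abel

end AuxLemmas

section GLemmas

variable {G : Type*} [AddGroup G] [PartialOrder G]
  [CovariantClass G G (· + ·) (· ≤ ·)]
  [CovariantClass G G (Function.swap (· + ·)) (· ≤ ·)]

lemma rdp_of_rdp1 (hG : RDP1 G) : RDP G := by
  intro a₁ a₂ b₁ b₂ h1 h2 h3 h4 he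
  obtain ⟨c₁₁, c₁₂, c₂₁, c₂₂, p1, p2, p3, p4, e1, e2, e3, e4, -⟩ :=
    hG a₁ a₂ b₁ b₂ h1 h2 h3 h4 he
  exact ⟨c₁₁, c₁₂, c₂₁, c₂₂, p1, p2, p3, p4, e1, e2, e3, e4⟩

lemma ub3 (hdir : ∀ x y : G, ∃ z : G, x ≤ z ∧ y ≤ z) (a b c : G) :
    ∃ z : G, a ≤ z ∧ b ≤ z ∧ c ≤ z := by
  obtain ⟨w, hw1, hw2⟩ := hdir a b
  obtain ⟨z, hz1, hz2⟩ := hdir w c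
  exact ⟨z, hw1.trans hz1, hw2.trans hz1, hz2⟩

lemma shift_right (hdir : ∀ x y : G, ∃ z : G, x ≤ z ∧ y ≤ z) (hG : RDP1 G)
    (g₁ g₂ h₁ h₂ : G) (hg : 0 ≤ g₁) (hh : 0 ≤ h₁) (he : g₁ + g₂ = h₁ + h₂) :
    ∃ d₁ d₂ d₃ d₄ : G, 0 ≤ d₁ ∧ 0 ≤ d₂ ∧ 0 ≤ d₃ ∧
      g₁ = d₁ + d₂ ∧ g₂ = d₃ + d₄ ∧ h₁ = d₁ + d₃ ∧ h₂ = d₂ + d₄ := by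
  obtain ⟨e, he1, he2, he3⟩ := ub3 hdir (-g₂) (-h₂) 0
  have hg2 : 0 ≤ g₂ + e := by
    have := add_le_add_right he1 g₂
    rwa [add_neg_cancel] at this
  have hh2 : 0 ≤ h₂ + e := by
    have := add_le_add_right he2 h₂
    rwa [add_neg_cancel] at this
  have heq : g₁ + (g₂ + e) = h₁ + (h₂ + e) := by
    rw [← add_assoc, ← add_assoc, he]
  obtain ⟨c₁₁, c₁₂, c₂₁, c₂₂, p1, p2, p3, p4, e1, e2, e3, e4, -⟩ :=
    hG g₁ (g₂ + e) h₁ (h₂ + e) hg hg2 hh hh2 heq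
  refine ⟨c₁₁, c₁₂, c₂₁, c₂₂ + -e, p1, p2, p3, e1, ?_, e3, ?_⟩
  · rw [← add_assoc, ← e2, add_neg_cancel_right]
  · rw [← add_assoc, ← e4, add_neg_cancel_right]

lemma shift_left (hdir : ∀ x y : G, ∃ z : G, x ≤ z ∧ y ≤ z) (hG : RDP1 G)
    (g₁ g₂ h₁ h₂ : G) (hg : 0 ≤ g₂) (hh : 0 ≤ h₂) (he : g₁ + g₂ = h₁ + h₂) :
    ∃ d₁ d₂ d₃ d₄ : G, 0 ≤ d₂ ∧ 0 ≤ d₃ ∧ 0 ≤ d₄ ∧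
      g₁ = d₁ + d₂ ∧ g₂ = d₃ + d₄ ∧ h₁ = d₁ + d₃ ∧ h₂ = d₂ + d₄ := by
  obtain ⟨e, he1, he2, he3⟩ := ub3 hdir (-g₁) (-h₁) 0
  have hg1 : 0 ≤ e + g₁ := by
    have := add_le_add_left he1 g₁
    rwa [neg_add_cancel] at this
  have hh1 : 0 ≤ e + h₁ := by
    have := add_le_add_left he2 h₁
    rwa [neg_add_cancel] at this
  have heq : (e + g₁) + g₂ = (e + h₁) + h₂ := by
    rw [add_assoc, add_assoc, he]
  obtain ⟨c₁₁, c₁₂, c₂₁, c₂₂, p1, p2, p3, p4, e1, e2, e3, e4, -⟩ :=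
    hG (e + g₁) g₂ (e + h₁) h₂ hg1 hg hh1 hh heq
  refine ⟨-e + c₁₁, c₁₂, c₂₁, c₂₂, p2, p3, p4, ?_, e2, ?_, e4⟩
  · rw [add_assoc, ← e1, neg_add_cancel_left]
  · rw [add_assoc, ← e3, neg_add_cancel_left]

lemma exists_pos_noncomm (hdir : ∀ x y : G, ∃ z : G, x ≤ z ∧ y ≤ z)
    (hna : ∃ x y : G, x + y ≠ y + x) :
    ∃ x y : G, 0 ≤ x ∧ 0 ≤ y ∧ x + y ≠ y + x := by
  by_contra hc
  push_neg at hc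
  obtain ⟨x, y, hxy⟩ := hna
  apply hxy
  have rep : ∀ g : G, ∃ z n : G, 0 ≤ z ∧ 0 ≤ n ∧ g = z + -n := by
    intro g
    obtain ⟨z, hz1, hz2⟩ := hdir g 0
    refine ⟨z, -g + z, hz2, ?_, ?_⟩
    · have := add_le_add_right hz1 (-g)
      rwa [neg_add_cancel] at this
    · rw [neg_add_rev, neg_neg, add_neg_cancel_left]
  obtain ⟨z₁, n₁, hz₁, hn₁, rfl⟩ := rep x
  obtain ⟨z₂, n₂, hz₂, hn₂, rfl⟩ := rep y
  have c : ∀ a b : G, 0 ≤ a → 0 ≤ b → AddCommute a b := fun a b ha hb => hc a b ha hb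
  exact ((c z₁ z₂ hz₁ hz₂).add_right (c z₁ n₂ hz₁ hn₂).neg_right).add_left
    ((c n₁ z₂ hn₁ hz₂).neg_left.add_right (c n₁ n₂ hn₁ hn₂).neg_left.neg_right)

end GLemmas

section LexLemmas

variable {I : Type*} {A : I → Type*} [∀ i, AddCommGroup (A i)] [∀ i, LinearOrder (A i)] [∀ i, IsOrderedAddMonoid (A i)]
  {G : Type*} [AddGroup G] [PartialOrder G]

lemma lex_add (p q : StrictPi A) (d e : G) :
    toLex (p, d) + toLex (q, e) = toLex (p + q, d + e) := rfl

lemma lex_eq {p q : StrictPi A} {d e : G} (h1 : p = q) (h2 : d = e) :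
    (toLex (p, d) : StrictPi A ×ₗ G) = toLex (q, e) := by rw [h1, h2]

lemma lex_eq2 {p q q' : StrictPi A} {d e e' : G} (h1 : p = q + q') (h2 : d = e + e') :
    (toLex (p, d) : StrictPi A ×ₗ G) = toLex (q, e) + toLex (q', e') := by
  rw [lex_add]
  exact lex_eq h1 h2

lemma lex_pos_elim [Nonempty I] {p : StrictPi A} {d : G}
    (h : (0 : StrictPi A ×ₗ G) ≤ toLex (p, d)) : (p = 0 ∧ 0 ≤ d) ∨ ∀ i, 0 < p i := by
  rcases (Prod.Lex.toLex_le_toLex (x := ((0 : StrictPi A), (0 : G))) (y := (p, d))).1 h with h' | ⟨h1, h2⟩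
  · exact Or.inr (sp_pos_iff.1 h')
  · exact Or.inl ⟨h1.symm, h2⟩

lemma lex_nonneg_of_spos [Nonempty I] {p : StrictPi A} (d : G) (h : ∀ i, 0 < p i) :
    (0 : StrictPi A ×ₗ G) ≤ toLex (p, d) :=
  (Prod.Lex.toLex_le_toLex (x := ((0 : StrictPi A), (0 : G))) (y := (p, d))).2 (Or.inl (sp_pos_iff.2 h))

lemma lex_nonneg_of_zero {d : G} (h : 0 ≤ d) :
    (0 : StrictPi A ×ₗ G) ≤ toLex ((0 : StrictPi A), d) :=
  (Prod.Lex.toLex_le_toLex (x := ((0 : StrictPi A), (0 : G))) (y := ((0 : StrictPi A), d))).2 (Or.inr ⟨rfl, h⟩)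

lemma lex_le_of_spos {p : StrictPi A} {d : G} [Nonempty I] (q : StrictPi A) (e : G)
    (hq : ∀ i, 0 < (q - p) i) : (toLex (p, d) : StrictPi A ×ₗ G) ≤ toLex (q, e) := by
  refine (Prod.Lex.toLex_le_toLex (x := (p, d)) (y := (q, e))).2 (Or.inl ?_)
  have hlt : ∀ i, p i < q i := fun i => sub_pos.1 (hq i)
  refine lt_of_le_of_ne (sp_le_def.2 (Or.inr hlt)) ?_
  intro h
  have h' : p = q := h
  have := hlt (Classical.arbitrary I)
  rw [h'] at this
  exact lt_irrefl _ this

end LexLemmas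


lemma lex_rdp_core {I : Type*} [Nontrivial I] {A : I → Type*}
    [∀ i, AddCommGroup (A i)] [∀ i, LinearOrder (A i)] [∀ i, IsOrderedAddMonoid (A i)]
    (hdense : ∀ i, ∀ a : A i, 0 < a → ∃ a₀ : A i, 0 < a₀ ∧ a₀ < a)
    {G : Type*} [AddGroup G] [PartialOrder G]
    [CovariantClass G G (· + ·) (· ≤ ·)]
    [CovariantClass G G (Function.swap (· + ·)) (· ≤ ·)]
    (hdir : ∀ x y : G, ∃ z : G, x ≤ z ∧ y ≤ z) (hG : RDP1 G)
    (u v w x : StrictPi A) (g₁ g₂ h₁ h₂ : G)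
    (ha₁ : (0 : StrictPi A ×ₗ G) ≤ toLex (u, g₁)) (ha₂ : (0 : StrictPi A ×ₗ G) ≤ toLex (v, g₂))
    (hb₁ : (0 : StrictPi A ×ₗ G) ≤ toLex (w, h₁)) (hb₂ : (0 : StrictPi A ×ₗ G) ≤ toLex (x, h₂))
    (h1 : u + v = w + x) (h2 : g₁ + g₂ = h₁ + h₂) :
    ∃ c₁₁ c₁₂ c₂₁ c₂₂ : StrictPi A ×ₗ G, 0 ≤ c₁₁ ∧ 0 ≤ c₁₂ ∧ 0 ≤ c₂₁ ∧ 0 ≤ c₂₂ ∧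
      toLex (u, g₁) = c₁₁ + c₁₂ ∧ toLex (v, g₂) = c₂₁ + c₂₂ ∧
      toLex (w, h₁) = c₁₁ + c₂₁ ∧ toLex (x, h₂) = c₁₂ + c₂₂ := by
  rcases lex_pos_elim ha₁ with ⟨rfl, hg₁⟩ | hu
  · rcases lex_pos_elim ha₂ with ⟨rfl, hg₂⟩ | hv
    · -- u = v = 0
      have hwx : w + x = 0 := by rw [← h1, add_zero]
      rcases lex_pos_elim hb₁ with ⟨rfl, hh₁⟩ | hw
      · have hx0 : x = 0 := by rwa [zero_add] at hwx
        subst hx0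
        rcases lex_pos_elim hb₂ with ⟨-, hh₂⟩ | hxs
        · obtain ⟨c₁, c₂, c₃, c₄, p1, p2, p3, p4, e1, e2, e3, e4⟩ :=
            rdp_of_rdp1 hG g₁ g₂ h₁ h₂ hg₁ hg₂ hh₁ hh₂ h2
          exact ⟨toLex (0, c₁), toLex (0, c₂), toLex (0, c₃), toLex (0, c₄),
            lex_nonneg_of_zero p1, lex_nonneg_of_zero p2, lex_nonneg_of_zero p3,
            lex_nonneg_of_zero p4, lex_eq2 (add_zero (0 : StrictPi A)).symm e1,
            lex_eq2 (add_zero (0 : StrictPi A)).symm e2,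
            lex_eq2 (add_zero (0 : StrictPi A)).symm e3,
            lex_eq2 (add_zero (0 : StrictPi A)).symm e4⟩
        · exact absurd (hxs (Classical.arbitrary I)) (lt_irrefl _)
      · exfalso
        rcases lex_pos_elim hb₂ with ⟨rfl, -⟩ | hx
        · exact sp_sum_ne_zero hw (Or.inl rfl) hwx
        · exact sp_sum_ne_zero hw (Or.inr hx) hwx
    · -- u = 0, v strictly positive
      have hv' : v = w + x := by rwa [zero_add] at h1
      rcases lex_pos_elim hb₁ with ⟨rfl, hh₁⟩ | hw
      · have hvx : v = x := by rwa [zero_add] at hv'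
        rcases lex_pos_elim hb₂ with ⟨rfl, hh₂⟩ | hx
        · exfalso
          have := hv (Classical.arbitrary I)
          rw [hvx] at this
          exact lt_irrefl _ this
        · obtain ⟨d₁, d₂, d₃, d₄, q1, q2, q3, e1, e2, e3, e4⟩ :=
            shift_right hdir hG g₁ g₂ h₁ h₂ hg₁ hh₁ h2
          refine ⟨toLex (0, d₁), toLex (0, d₂), toLex (0, d₃), toLex (x, d₄),
            lex_nonneg_of_zero q1, lex_nonneg_of_zero q2, lex_nonneg_of_zero q3,
            lex_nonneg_of_spos _ hx, lex_eq2 (add_zero (0 : StrictPi A)).symm e1,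
            lex_eq2 (by rw [zero_add]; exact hvx) e2,
            lex_eq2 (add_zero (0 : StrictPi A)).symm e3,
            lex_eq2 (zero_add x).symm e4⟩
      · rcases lex_pos_elim hb₂ with ⟨rfl, hh₂⟩ | hx
        · -- v = w, x = 0
          have hvw : v = w := by rwa [add_zero] at hv'
          refine ⟨toLex (0, g₁), toLex (0, 0), toLex (w, -g₁ + h₁), toLex (0, h₂),
            lex_nonneg_of_zero hg₁, lex_nonneg_of_zero le_rfl, lex_nonneg_of_spos _ hw,
            lex_nonneg_of_zero hh₂, ?_, ?_, ?_, ?_⟩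
          · refine lex_eq2 ?_ ?_
            · exact (add_zero (0 : StrictPi A)).symm
            · exact (add_zero g₁).symm
          · refine lex_eq2 ?_ ?_
            · rw [add_zero]; exact hvw
            rw [add_assoc, ← h2, neg_add_cancel_left]
          · refine lex_eq2 ?_ ?_
            · exact (zero_add w).symm
            · rw [add_neg_cancel_left]
          · refine lex_eq2 ?_ ?_
            · exact (add_zero (0 : StrictPi A)).symm
            · exact (zero_add h₂).symm
        · -- v = w + x
          refine ⟨toLex (0, g₁), toLex (0, 0), toLex (w, -g₁ + h₁), toLex (x, h₂),
            lex_nonneg_of_zero hg₁, lex_nonneg_of_zero le_rfl, lex_nonneg_of_spos _ hw,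
            lex_nonneg_of_spos _ hx, ?_, ?_, ?_, ?_⟩
          · refine lex_eq2 ?_ ?_
            · exact (add_zero (0 : StrictPi A)).symm
            · exact (add_zero g₁).symm
          · refine lex_eq2 ?_ ?_
            · exact hv'
            rw [add_assoc, ← h2, neg_add_cancel_left]
          · refine lex_eq2 ?_ ?_
            · exact (zero_add w).symm
            · rw [add_neg_cancel_left]
          · refine lex_eq2 ?_ ?_
            · exact (zero_add x).symm
            · exact (zero_add h₂).symm
  · rcases lex_pos_elim ha₂ with ⟨rfl, hg₂⟩ | hv
    · -- v = 0, u strictly positive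
      have hu' : u = w + x := by rwa [add_zero] at h1
      rcases lex_pos_elim hb₁ with ⟨rfl, hh₁⟩ | hw
      · have hux : u = x := by rwa [zero_add] at hu'
        rcases lex_pos_elim hb₂ with ⟨rfl, hh₂⟩ | hx
        · exfalso
          have := hu (Classical.arbitrary I)
          rw [hux] at this
          exact lt_irrefl _ this
        · -- case 6
          refine ⟨toLex (0, h₁), toLex (u, -h₁ + g₁), toLex (0, 0), toLex (0, g₂),
            lex_nonneg_of_zero hh₁, lex_nonneg_of_spos _ hu, lex_nonneg_of_zero le_rfl,
            lex_nonneg_of_zero hg₂, ?_, ?_, ?_, ?_⟩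
          · refine lex_eq2 ?_ ?_
            · exact (zero_add u).symm
            · rw [add_neg_cancel_left]
          · refine lex_eq2 ?_ ?_
            · exact (add_zero (0 : StrictPi A)).symm
            · exact (zero_add g₂).symm
          · refine lex_eq2 ?_ ?_
            · exact (add_zero (0 : StrictPi A)).symm
            · exact (add_zero h₁).symm
          · refine lex_eq2 ?_ ?_
            · rw [add_zero]; exact hux.symm
            rw [add_assoc, h2, neg_add_cancel_left]
      · rcases lex_pos_elim hb₂ with ⟨rfl, hh₂⟩ | hx
        · -- case 7 : u = w, x = 0
          have huw : u = w := by rwa [add_zero] at hu'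
          obtain ⟨d₁, d₂, d₃, d₄, q2, q3, q4, e1, e2, e3, e4⟩ :=
            shift_left hdir hG g₁ g₂ h₁ h₂ hg₂ hh₂ h2
          refine ⟨toLex (u, d₁), toLex (0, d₂), toLex (0, d₃), toLex (0, d₄),
            lex_nonneg_of_spos _ hu, lex_nonneg_of_zero q2, lex_nonneg_of_zero q3,
            lex_nonneg_of_zero q4, ?_, ?_, ?_, ?_⟩
          · refine lex_eq2 ?_ ?_
            · exact (add_zero u).symm
            · exact e1
          · refine lex_eq2 ?_ ?_
            · exact (add_zero (0 : StrictPi A)).symm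
            · exact e2
          · refine lex_eq2 ?_ ?_
            · rw [add_zero]; exact huw.symm
            · exact e3
          · refine lex_eq2 ?_ ?_
            · exact (add_zero (0 : StrictPi A)).symm
            · exact e4
        · -- case 8 : u = w + x
          refine ⟨toLex (w, h₁), toLex (x, -h₁ + g₁), toLex (0, 0), toLex (0, g₂),
            lex_nonneg_of_spos _ hw, lex_nonneg_of_spos _ hx, lex_nonneg_of_zero le_rfl,
            lex_nonneg_of_zero hg₂, ?_, ?_, ?_, ?_⟩
          · refine lex_eq2 ?_ ?_
            · exact hu'
            · rw [add_neg_cancel_left]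
          · refine lex_eq2 ?_ ?_
            · exact (add_zero (0 : StrictPi A)).symm
            · exact (zero_add g₂).symm
          · refine lex_eq2 ?_ ?_
            · exact (add_zero w).symm
            · exact (add_zero h₁).symm
          · refine lex_eq2 ?_ ?_
            · exact (add_zero x).symm
            rw [add_assoc, h2, neg_add_cancel_left]
    · -- u, v strictly positive
      rcases lex_pos_elim hb₁ with ⟨rfl, hh₁⟩ | hw
      · have hx' : x = u + v := by rw [zero_add] at h1; exact h1.symm
        rcases lex_pos_elim hb₂ with ⟨rfl, hh₂⟩ | hx
        · exact absurd hx'.symm (sp_sum_ne_zero hu (Or.inr hv))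
        · -- case 9
          refine ⟨toLex (0, h₁), toLex (u, -h₁ + g₁), toLex (0, 0), toLex (v, g₂),
            lex_nonneg_of_zero hh₁, lex_nonneg_of_spos _ hu, lex_nonneg_of_zero le_rfl,
            lex_nonneg_of_spos _ hv, ?_, ?_, ?_, ?_⟩
          · refine lex_eq2 ?_ ?_
            · exact (zero_add u).symm
            · rw [add_neg_cancel_left]
          · refine lex_eq2 ?_ ?_
            · exact (zero_add v).symm
            · exact (zero_add g₂).symm
          · refine lex_eq2 ?_ ?_
            · exact (add_zero (0 : StrictPi A)).symm
            · exact (add_zero h₁).symm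
          · refine lex_eq2 ?_ ?_
            · exact hx'
            rw [add_assoc, h2, neg_add_cancel_left]
      · rcases lex_pos_elim hb₂ with ⟨rfl, hh₂⟩ | hx
        · -- case 10 : w = u + v
          have hw' : w = u + v := by rw [add_zero] at h1; exact h1.symm
          refine ⟨toLex (u, g₁), toLex (0, 0), toLex (v, -g₁ + h₁), toLex (0, h₂),
            lex_nonneg_of_spos _ hu, lex_nonneg_of_zero le_rfl, lex_nonneg_of_spos _ hv,
            lex_nonneg_of_zero hh₂, ?_, ?_, ?_, ?_⟩
          · refine lex_eq2 ?_ ?_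
            · exact (add_zero u).symm
            · exact (add_zero g₁).symm
          · refine lex_eq2 ?_ ?_
            · exact (add_zero v).symm
            rw [add_assoc, ← h2, neg_add_cancel_left]
          · refine lex_eq2 ?_ ?_
            · exact hw'
            · rw [add_neg_cancel_left]
          · refine lex_eq2 ?_ ?_
            · exact (add_zero (0 : StrictPi A)).symm
            · exact (zero_add h₂).symm
        · -- case 11 : all strictly positive
          obtain ⟨q, hq1, hq2, hq3, hq4⟩ := sp_split hdense hu hv hw hx h1
          refine ⟨toLex (q, g₁), toLex (u - q, 0), toLex (w - q, -g₁ + h₁),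
            toLex (x - u + q, -(-g₁ + h₁) + g₂),
            lex_nonneg_of_spos _ hq1, lex_nonneg_of_spos _ hq2, lex_nonneg_of_spos _ hq3,
            lex_nonneg_of_spos _ hq4, ?_, ?_, ?_, ?_⟩
          · refine lex_eq2 ?_ ?_
            · abel
            · exact (add_zero g₁).symm
          · refine lex_eq2 ?_ ?_
            · have hv' : v = w + x - u := by rw [← h1]; abel
              rw [hv']; abel
            · exact (add_neg_cancel_left _ _).symm
          · refine lex_eq2 ?_ ?_
            · abel
            · rw [add_neg_cancel_left]
          · refine lex_eq2 ?_ ?_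
            · abel
            rw [zero_add, neg_add_rev, neg_neg, add_assoc, h2, neg_add_cancel_left]

/-- Let `{Aᵢ}` (with `|I| > 1`) be a family of non-trivial Abelian linearly
ordered groups such that every strictly positive element of each `Aᵢ` dominates a strictly
positive element. Let `A = ∏ i, Aᵢ` carry the strict product ordering and let `G` be a
non-Abelian directed po-group with RDP₁. Then the lexicographic product `A ×ₗ G`
satisfies RDP but RDP₁ fails in it. -/
theorem rdp_not_rdp1_lex_strictPi {I : Type*} [Nontrivial I] (A : I → Type*)
    [∀ i, AddCommGroup (A i)] [∀ i, LinearOrder (A i)] [∀ i, IsOrderedAddMonoid (A i)]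
    [∀ i, Nontrivial (A i)]
    (hdense : ∀ i, ∀ a : A i, 0 < a → ∃ a₀ : A i, 0 < a₀ ∧ a₀ < a)
    {G : Type*} [AddGroup G] [PartialOrder G]
    [CovariantClass G G (· + ·) (· ≤ ·)]
    [CovariantClass G G (Function.swap (· + ·)) (· ≤ ·)]
    (hdir : ∀ x y : G, ∃ z : G, x ≤ z ∧ y ≤ z)
    (hna : ∃ x y : G, x + y ≠ y + x)
    (hG : RDP1 G) :
    RDP (StrictPi A ×ₗ G) ∧ ¬ RDP1 (StrictPi A ×ₗ G) := by
  classical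
  constructor
  · intro a₁ a₂ b₁ b₂ ha₁ ha₂ hb₁ hb₂ heq
    exact lex_rdp_core hdense hdir hG (ofLex a₁).1 (ofLex a₂).1 (ofLex b₁).1 (ofLex b₂).1
      (ofLex a₁).2 (ofLex a₂).2 (ofLex b₁).2 (ofLex b₂).2 ha₁ ha₂ hb₁ hb₂
      (congrArg (fun z => (ofLex z).1) heq) (congrArg (fun z => (ofLex z).2) heq)
  · intro hR
    obtain ⟨i₀, j₀, hij⟩ := exists_pair_ne I
    have epos : ∀ i, ∃ t : A i, 0 < t := by
      intro i
      obtain ⟨t, ht⟩ := exists_ne (0 : A i)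
      rcases lt_or_gt_of_ne ht with h | h
      · exact ⟨-t, neg_pos.2 h⟩
      · exact ⟨t, h⟩
    choose e he using epos
    obtain ⟨δ, hδ1, hδ2⟩ := hdense j₀ (e j₀) (he j₀)
    set w : StrictPi A := Function.update (Function.update e i₀ (e i₀ + e i₀)) j₀ δ with hwdef
    have hwi₀ : w i₀ = e i₀ + e i₀ := by
      rw [hwdef, Function.update_of_ne hij, Function.update_self]
    have hwj₀ : w j₀ = δ := by rw [hwdef, Function.update_self]
    have hwpos : ∀ i, 0 < w i := by
      intro i
      by_cases h : i = j₀
      · subst h; rw [hwj₀]; exact hδ1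
      · rw [hwdef, Function.update_of_ne h]
        by_cases h' : i = i₀
        · subst h'; rw [Function.update_self]; exact add_pos (he i) (he i)
        · rw [Function.update_of_ne h']; exact he i
    obtain ⟨c₁₁, c₁₂, c₂₁, c₂₂, p1, p2, p3, p4, e1, e2, e3, e4, hcomm⟩ :=
      hR (toLex (e, (0 : G))) (toLex (w, 0)) (toLex (w, 0)) (toLex (e, 0))
        (lex_nonneg_of_spos _ he) (lex_nonneg_of_spos _ hwpos)
        (lex_nonneg_of_spos _ hwpos) (lex_nonneg_of_spos _ he)
        (lex_eq (add_comm e w) rfl)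
    have f1 : e = (ofLex c₁₁).1 + (ofLex c₁₂).1 := congrArg (fun z => (ofLex z).1) e1
    have f3 : w = (ofLex c₁₁).1 + (ofLex c₂₁).1 := congrArg (fun z => (ofLex z).1) e3
    have p2' : (0 : StrictPi A ×ₗ G) ≤ toLex ((ofLex c₁₂).1, (ofLex c₁₂).2) := p2
    have p3' : (0 : StrictPi A ×ₗ G) ≤ toLex ((ofLex c₂₁).1, (ofLex c₂₁).2) := p3
    have hP12 : ∀ i, 0 < (ofLex c₁₂).1 i := by
      rcases lex_pos_elim p2' with ⟨h0, -⟩ | h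
      · exfalso
        rw [h0, add_zero] at f1
        rw [← f1] at f3
        rcases lex_pos_elim p3' with ⟨h0', -⟩ | h'
        · rw [h0'] at f3; replace f3 : w = e := f3.trans (add_zero (e : StrictPi A))
          have hf : e i₀ + e i₀ = e i₀ := by
            have h'' : w i₀ = e i₀ := congrFun f3 i₀
            rwa [hwi₀] at h''
          exact (he i₀).ne' (add_eq_right.1 hf)
        · have hf : w j₀ = e j₀ + (ofLex c₂₁).1 j₀ := congrFun f3 j₀
          rw [hwj₀] at hf
          have hlt : e j₀ < e j₀ + (ofLex c₂₁).1 j₀ := lt_add_of_pos_right _ (h' j₀)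
          rw [← hf] at hlt
          exact absurd hlt (not_lt.2 hδ2.le)
      · exact h
    have hP21 : ∀ i, 0 < (ofLex c₂₁).1 i := by
      rcases lex_pos_elim p3' with ⟨h0, -⟩ | h
      · exfalso
        rw [h0, add_zero] at f3
        rw [← f3] at f1
        rcases lex_pos_elim p2' with ⟨h0', -⟩ | h'
        · rw [h0', add_zero] at f1
          have hf : e i₀ + e i₀ = e i₀ := by
            have h'' : e i₀ = w i₀ := congrFun f1 i₀
            rw [hwi₀] at h''
            exact h''.symm
          exact (he i₀).ne' (add_eq_right.1 hf)
        · have hf : e i₀ = w i₀ + (ofLex c₁₂).1 i₀ := congrFun f1 i₀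
          rw [hwi₀] at hf
          have hlt : e i₀ < e i₀ + e i₀ + (ofLex c₁₂).1 i₀ :=
            lt_add_of_pos_right _ (h' i₀) |>.trans_le' (le_add_of_nonneg_right (he i₀).le)
          rw [← hf] at hlt
          exact lt_irrefl _ hlt
      · exact h
    obtain ⟨x, y, hx0, hy0, hxy⟩ := exists_pos_noncomm hdir hna
    apply hxy
    have hcx : (0 : StrictPi A ×ₗ G) ≤ toLex ((0 : StrictPi A), x) := lex_nonneg_of_zero hx0
    have hcy : (0 : StrictPi A ×ₗ G) ≤ toLex ((0 : StrictPi A), y) := lex_nonneg_of_zero hy0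
    have hlex : (toLex ((0 : StrictPi A), x) : StrictPi A ×ₗ G) ≤ c₁₂ :=
      lex_le_of_spos (ofLex c₁₂).1 (ofLex c₁₂).2
        (fun i => by show (0 : A i) < (ofLex c₁₂).1 i - 0; rw [sub_zero]; exact hP12 i)
    have hley : (toLex ((0 : StrictPi A), y) : StrictPi A ×ₗ G) ≤ c₂₁ :=
      lex_le_of_spos (ofLex c₂₁).1 (ofLex c₂₁).2
        (fun i => by show (0 : A i) < (ofLex c₂₁).1 i - 0; rw [sub_zero]; exact hP21 i)
    have hc := hcomm (toLex (0, x)) (toLex (0, y)) hcx hlex hcy hley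
    have : x + y = y + x := congrArg (fun z => (ofLex z).2) hc
    exact this
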